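/- Let p be an odd prime with p ≡ 3 (mod 4). Then for every y ∈ F_p^*: Σ_{x ∈ C_0^{(2,p)}} η(x^2 - y) = Σ_{x ∈ C_1^{(2,p)}} η(x^2 - y), and this common value equals 0 if y ∈ C_0^{(2,p)} and equals -1 if y ∈ C_1^{(2,p)}. -/

import Mathlib

open scoped BigOperators

noncomputable section

/-- The primitive `p`-th root of unity `ζ_p = exp(2πi/p)`. -/
def zetaP (p : ℕ) : ℂ := Complex.exp (2 * Real.pi * Complex.I / p)

/-- The absolute trace map from `F_q = GF(p^e)` onto `F_p`. -/
def tr (p e : ℕ) [Fact p.Prime] (x : GaloisField p e) : ZMod p :=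
  Algebra.trace (ZMod p) (GaloisField p e) x

/-- The Weil sum `S(α, β) = Σ_{x ∈ F_q} ζ_p^{Tr(α x^{p^l+1} + β x)}`. -/
def weilSum (p e l : ℕ) [Fact p.Prime] (α β : GaloisField p e) : ℂ :=
  letI : Fintype (GaloisField p e) := Fintype.ofFinite _
  ∑ x : GaloisField p e, zetaP p ^ (tr p e (α * x ^ (p ^ l + 1) + β * x)).val

/- The quadratic character `η` of `F_p`, integer-valued:
`η(0) = 0`, `η(x) = 1` for nonzero squares, `η(x) = -1` for nonsquares. -/
open Classical in
def eta (p : ℕ) (x : ZMod p) : ℤ :=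
  if x = 0 then 0 else if IsSquare x then 1 else -1

/- The cyclotomic classes of order 2 in `F_p^*`: `cyc p 0` is the set of nonzero
squares `C_0^{(2,p)}`, and `cyc p 1` is the set of nonsquares `C_1^{(2,p)}`. -/
open Classical in
def cyc (p : ℕ) [Fact p.Prime] (i : ℕ) : Finset (ZMod p) :=
  Finset.univ.filter (fun x => x ≠ 0 ∧ (if i = 0 then IsSquare x else ¬ IsSquare x))

/-- `ψ_3(a) = ((p-1)/2) p^{e-3} Σ_{z1 ∈ F_p^*} ζ_p^{-z1} Σ_{z3 ∈ F_p^*} S(z1, a z3)`. -/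
def psi3 (p e l : ℕ) [Fact p.Prime] (a : GaloisField p e) : ℂ :=
  ((p : ℂ) - 1) / 2 * (p : ℂ) ^ ((e : ℤ) - 3) *
    ∑ z1 ∈ ({0}ᶜ : Finset (ZMod p)), zetaP p ^ (-z1).val *
      ∑ z3 ∈ ({0}ᶜ : Finset (ZMod p)),
        weilSum p e l (algebraMap (ZMod p) (GaloisField p e) z1)
          (a * algebraMap (ZMod p) (GaloisField p e) z3)

/-- `ψ_4^{(i)}(a, b) = p^{e-3} Σ_{c ∈ C_i} Σ_{z1 ∈ F_p^*} ζ_p^{-z1}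
      Σ_{z2 ∈ F_p^*} ζ_p^{-c z2} S(z1, -a b⁻¹ z2)`, for `b ∈ F_p^*`. -/
def psi4 (p e l : ℕ) [Fact p.Prime] (i : ℕ) (a : GaloisField p e) (b : ZMod p) : ℂ :=
  (p : ℂ) ^ ((e : ℤ) - 3) *
    ∑ c ∈ cyc p i, ∑ z1 ∈ ({0}ᶜ : Finset (ZMod p)), zetaP p ^ (-z1).val *
      ∑ z2 ∈ ({0}ᶜ : Finset (ZMod p)), zetaP p ^ (-(c * z2)).val *
        weilSum p e l (algebraMap (ZMod p) (GaloisField p e) z1)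
          (-a * algebraMap (ZMod p) (GaloisField p e) (b⁻¹ * z2))

/-- `T_i(a,b) = |{(x1,x2) ∈ F_q² : Tr(x1^{p^l+1}) = 1, Tr(x2) ∈ C_i, Tr(a x1 + b x2) = 0}|`. -/
def Tcount (p e l : ℕ) [Fact p.Prime] (i : ℕ) (a b : GaloisField p e) : ℕ :=
  Nat.card {x : GaloisField p e × GaloisField p e //
    tr p e (x.1 ^ (p ^ l + 1)) = 1 ∧ tr p e x.2 ∈ cyc p i ∧ tr p e (a * x.1 + b * x.2) = 0}

/-- The defining set `D_i = {(x1,x2) ∈ F_q² : Tr(x1^{p^l+1}) = 1, Tr(x2) ∈ C_i^{(2,p)}}`. -/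
def Dset (p e l : ℕ) [Fact p.Prime] (i : ℕ) : Set (GaloisField p e × GaloisField p e) :=
  {x | tr p e (x.1 ^ (p ^ l + 1)) = 1 ∧ tr p e x.2 ∈ cyc p i}

/-- The codeword of `C_{D_i}` indexed by `(a, b) ∈ F_q²`:
the vector `(Tr(a x1 + b x2))_{(x1,x2) ∈ D_i}`. -/
def codeword (p e l : ℕ) [Fact p.Prime] (i : ℕ) (a b : GaloisField p e) :
    Dset p e l i → ZMod p :=
  fun x => tr p e (a * x.1.1 + b * x.1.2)

/-- The linear code `C_{D_i} = {(Tr(a x1 + b x2))_{(x1,x2) ∈ D_i} : a, b ∈ F_q}`. -/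
def code (p e l : ℕ) [Fact p.Prime] (i : ℕ) : Set (Dset p e l i → ZMod p) :=
  Set.range (fun ab : GaloisField p e × GaloisField p e => codeword p e l i ab.1 ab.2)

/-- The Hamming weight of a vector: the number of nonzero coordinates. -/
def wt {ι : Type*} {p : ℕ} (c : ι → ZMod p) : ℕ := Nat.card {x : ι // c x ≠ 0}


open Finset

lemma eta_eq_quadChar (p : ℕ) [Fact p.Prime] (x : ZMod p) :
    eta p x = quadraticChar (ZMod p) x := by
  rw [eta, quadraticChar_apply, quadraticCharFun]
  split_ifs <;> rfl

lemma ringChar_ne_two' (p : ℕ) [Fact p.Prime] (hp : p % 4 = 3) : ringChar (ZMod p) ≠ 2 := by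
  rw [ZMod.ringChar_zmod_n]; omega

lemma quadChar_neg' (p : ℕ) [Fact p.Prime] (hp : p % 4 = 3) (x : ZMod p) :
    quadraticChar (ZMod p) (-x) = - quadraticChar (ZMod p) x := by
  have h1 : quadraticChar (ZMod p) (-1 : ZMod p) = -1 := by
    rw [quadraticChar_neg_one_iff_not_isSquare, FiniteField.isSquare_neg_one_iff, ZMod.card]
    simp [hp]
  rw [show (-x : ZMod p) = -1 * x by ring, map_mul, h1]
  ring

lemma isSquare_neg_iff' (p : ℕ) [Fact p.Prime] (hp : p % 4 = 3) {x : ZMod p} (hx : x ≠ 0) :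
    IsSquare (-x : ZMod p) ↔ ¬ IsSquare x := by
  rw [← quadraticChar_one_iff_isSquare (neg_ne_zero.mpr hx),
    quadChar_neg' p hp, ← quadraticChar_neg_one_iff_not_isSquare]
  omega

lemma mem_cyc0 (p : ℕ) [Fact p.Prime] {x : ZMod p} :
    x ∈ cyc p 0 ↔ x ≠ 0 ∧ IsSquare x := by simp [cyc]

lemma mem_cyc1 (p : ℕ) [Fact p.Prime] {x : ZMod p} :
    x ∈ cyc p 1 ↔ x ≠ 0 ∧ ¬ IsSquare x := by simp [cyc]

lemma sum_quadChar_sq_sub (p : ℕ) [Fact p.Prime] (hp : p % 4 = 3) {y : ZMod p} (hy : y ≠ 0) :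
    (∑ x : ZMod p, (quadraticChar (ZMod p)) (x ^ 2 - y)) = -1 := by
  have hchar := ringChar_ne_two' p hp
  have h2 : (2 : ZMod p) ≠ 0 := Ring.two_ne_zero hchar
  have hcard : ∀ a : ZMod p,
      (((univ.filter (fun z : ZMod p => z ^ 2 = a)).card : ℤ)) = quadraticChar (ZMod p) a + 1 := by
    intro a
    have := quadraticChar_card_sqrts hchar a
    rwa [Set.toFinset_setOf] at this
  have h1 : (∑ x : ZMod p, (quadraticChar (ZMod p)) (x ^ 2 - y)) =
      (∑ x : ZMod p, (((univ.filter (fun z : ZMod p => z ^ 2 = x ^ 2 - y)).card : ℤ) - 1)) := by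
    refine Finset.sum_congr rfl fun x _ => ?_
    rw [hcard]; ring
  have hA : (∑ x : ZMod p, (univ.filter (fun z : ZMod p => z ^ 2 = x ^ 2 - y)).card) =
      ((univ ×ˢ univ).filter (fun q : ZMod p × ZMod p => q.2 ^ 2 = q.1 ^ 2 - y)).card := by
    simp only [Finset.card_filter, Finset.sum_product]
  have hB : ((univ ×ˢ univ).filter (fun q : ZMod p × ZMod p => q.2 ^ 2 = q.1 ^ 2 - y)).card =
      ((univ ×ˢ univ).filter (fun q : ZMod p × ZMod p => q.1 * q.2 = y)).card := by
    refine Finset.card_nbij (fun q => (q.1 - q.2, q.1 + q.2)) ?_ ?_ ?_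
    · intro q hq
      simp only [mem_coe, mem_filter, mem_product, mem_univ, true_and, and_true] at hq ⊢
      linear_combination -hq
    · intro q1 hq1 q2 hq2 h
      simp only [Prod.mk.injEq] at h
      obtain ⟨hu, hv⟩ := h
      have e1 : (2 : ZMod p) * q1.1 = 2 * q2.1 := by linear_combination hu + hv
      have e2 : (2 : ZMod p) * q1.2 = 2 * q2.2 := by linear_combination hv - hu
      exact Prod.ext (mul_left_cancel₀ h2 e1) (mul_left_cancel₀ h2 e2)
    · intro b hb
      simp only [mem_coe, mem_filter, mem_product, mem_univ, true_and] at hb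
      refine ⟨((b.1 + b.2) / 2, (b.2 - b.1) / 2), ?_, ?_⟩
      · simp only [coe_filter, Set.mem_setOf_eq, mem_product, mem_univ, true_and]
        field_simp
        linear_combination (-(4 : ZMod p)) * hb
      · simp only []
        have e1 : (b.1 + b.2) / 2 - (b.2 - b.1) / 2 = b.1 := by field_simp; ring
        have e2 : (b.1 + b.2) / 2 + (b.2 - b.1) / 2 = b.2 := by field_simp; ring
        rw [Prod.ext_iff]
        exact ⟨e1, e2⟩
  have hC : ((univ ×ˢ univ).filter (fun q : ZMod p × ZMod p => q.1 * q.2 = y)).card = p - 1 := by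
    have : ((univ ×ˢ univ).filter (fun q : ZMod p × ZMod p => q.1 * q.2 = y)).card =
        (univ.erase (0 : ZMod p)).card := by
      refine Finset.card_nbij' (fun q => q.1) (fun u => (u, u⁻¹ * y)) ?_ ?_ ?_ ?_
      · intro q hq
        simp only [mem_coe, mem_filter, mem_product, mem_univ, true_and] at hq
        simp only [mem_coe, mem_erase, mem_univ, and_true]
        intro h0
        exact hy (by rw [← hq, h0]; ring)
      · intro u hu
        simp only [mem_coe, mem_erase, mem_univ, and_true] at hu
        simp only [mem_coe, mem_filter, mem_product, mem_univ, true_and]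
        rw [← mul_assoc, mul_inv_cancel₀ hu, one_mul]
      · intro q hq
        simp only [mem_coe, mem_filter, mem_product, mem_univ, true_and] at hq
        have hq1 : q.1 ≠ 0 := by
          rintro h0
          exact hy (by rw [← hq, h0]; ring)
        ext
        · rfl
        · simp only
          rw [← hq, inv_mul_cancel_left₀ hq1]
      · intro u hu
        rfl
    rw [this, Finset.card_erase_of_mem (mem_univ _), Finset.card_univ, ZMod.card]
  have hple : 1 ≤ p := (Fact.out : p.Prime).one_lt.le
  rw [h1, Finset.sum_sub_distrib, Finset.sum_const, Finset.card_univ, ZMod.card,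
    nsmul_eq_mul, mul_one, ← Nat.cast_sum, hA, hB, hC]
  push_cast [Nat.cast_sub hple]
  ring

/-- for `p ≡ 3 (mod 4)` and `y ∈ F_p^*`,
`Σ_{x ∈ C_0} η(x² - y) = Σ_{x ∈ C_1} η(x² - y)`, with common value
`0` if `y ∈ C_0` and `-1` if `y ∈ C_1` (paper Lemma 7). -/
theorem eta_sum_eval (p : ℕ) [Fact p.Prime] (hp : p % 4 = 3)
    (y : ZMod p) (hy : y ≠ 0) :
    (∑ x ∈ cyc p 0, eta p (x ^ 2 - y)) = (∑ x ∈ cyc p 1, eta p (x ^ 2 - y)) ∧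
    (y ∈ cyc p 0 → (∑ x ∈ cyc p 0, eta p (x ^ 2 - y)) = 0) ∧
    (y ∈ cyc p 1 → (∑ x ∈ cyc p 0, eta p (x ^ 2 - y)) = -1) := by
  simp only [eta_eq_quadChar]
  have h01 : (∑ x ∈ cyc p 0, (quadraticChar (ZMod p)) (x ^ 2 - y)) =
      (∑ x ∈ cyc p 1, (quadraticChar (ZMod p)) (x ^ 2 - y)) := by
    refine Finset.sum_nbij' (fun x => -x) (fun x => -x) ?_ ?_ ?_ ?_ ?_
    · intro a ha
      rw [mem_cyc0] at ha
      rw [mem_cyc1]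
      exact ⟨neg_ne_zero.mpr ha.1, fun h => ((isSquare_neg_iff' p hp ha.1).mp h) ha.2⟩
    · intro a ha
      rw [mem_cyc1] at ha
      rw [mem_cyc0]
      exact ⟨neg_ne_zero.mpr ha.1, (isSquare_neg_iff' p hp ha.1).mpr ha.2⟩
    · intro a _; exact neg_neg a
    · intro a _; exact neg_neg a
    · intro a _; rw [neg_sq]
  have hdisj : Disjoint (cyc p 0) (cyc p 1) := by
    rw [Finset.disjoint_left]
    intro a h0 h1
    rw [mem_cyc0] at h0; rw [mem_cyc1] at h1
    exact h1.2 h0.2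
  have h0notin : (0 : ZMod p) ∉ cyc p 0 ∪ cyc p 1 := by
    simp [mem_cyc0, mem_cyc1]
  have huniv : insert (0 : ZMod p) (cyc p 0 ∪ cyc p 1) = univ := by
    ext x
    by_cases hx : x = 0
    · simp [hx]
    · simp only [mem_insert, mem_union, mem_cyc0, mem_cyc1, mem_univ, iff_true]
      by_cases hsq : IsSquare x
      · exact Or.inr (Or.inl ⟨hx, hsq⟩)
      · exact Or.inr (Or.inr ⟨hx, hsq⟩)
  have htot : (quadraticChar (ZMod p)) ((0 : ZMod p) ^ 2 - y) +
      ((∑ x ∈ cyc p 0, (quadraticChar (ZMod p)) (x ^ 2 - y)) +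
       (∑ x ∈ cyc p 1, (quadraticChar (ZMod p)) (x ^ 2 - y))) = -1 := by
    have h := sum_quadChar_sq_sub p hp hy
    rw [← huniv, Finset.sum_insert h0notin, Finset.sum_union hdisj] at h
    exact h
  have hz : ((0 : ZMod p) ^ 2 - y) = -y := by ring
  rw [hz, quadChar_neg' p hp] at htot
  refine ⟨h01, fun hy0 => ?_, fun hy1 => ?_⟩
  · rw [mem_cyc0] at hy0
    have : quadraticChar (ZMod p) y = 1 := (quadraticChar_one_iff_isSquare hy0.1).mpr hy0.2
    rw [this, ← h01] at htot
    omega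
  · rw [mem_cyc1] at hy1
    have : quadraticChar (ZMod p) y = -1 := quadraticChar_neg_one_iff_not_isSquare.mpr hy1.2
    rw [this, ← h01] at htot
    omega


end
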